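/- Let Ω = (0,1)×(0,1) \ ⋃_{j=1}^∞ ({1/2^j} × [0,1/2]) ⊂ ℝ², equipped with the inner length metric λ_Ω induced by the Euclidean metric, and for each j ∈ ℕ let x_j = (3/2^{j+2}, 0), regarded as a point of the metric boundary ∂_IΩ of (Ω,λ_Ω). Then λ_Ω(x_j, x_{j+1}) ≥ 1 for every j ∈ ℕ; consequently the sequence (x_j) has no convergent subsequence in (∂_IΩ, λ_Ω), so the metric boundary ∂_IΩ is closed and bounded but not compact. -/

import Mathlib

open Set Filter Metric Topology ENNReal

noncomputable section

/-- The domain `Ω = (0,1)×(0,1) \ ⋃_{j≥1} ({1/2ʲ} × [0,1/2])` in the Euclidean plane. -/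
def slitSquare : Set (EuclideanSpace ℝ (Fin 2)) :=
  {p | p 0 ∈ Ioo (0:ℝ) 1 ∧ p 1 ∈ Ioo (0:ℝ) 1} \
    ⋃ j : ℕ, {p | p 0 = 1 / 2 ^ (j + 1) ∧ p 1 ∈ Icc (0:ℝ) (1/2)}

/-- The boundary points `x_j = (3/2^{j+2}, 0)`. -/
def slitMidpoint (j : ℕ) : EuclideanSpace ℝ (Fin 2) :=
  (EuclideanSpace.equiv (Fin 2) ℝ).symm ![3 / 2 ^ (j + 2), 0]

/-- The inner length (pseudo)distance of `slitSquare`: the infimum of the Euclidean lengths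
of curves joining `p` to `q` inside `slitSquare`. -/
def innerEDistSlit (p q : EuclideanSpace ℝ (Fin 2)) : ℝ≥0∞ :=
  ⨅ (γ : ℝ → EuclideanSpace ℝ (Fin 2)) (a : ℝ) (b : ℝ)
    (_ : a ≤ b ∧ ContinuousOn γ (Icc a b) ∧ γ a = p ∧ γ b = q ∧
      Set.MapsTo γ (Icc a b) slitSquare),
    eVariationOn γ (Icc a b)

/-- A coordinate of the difference is dominated by the Euclidean distance. -/
lemma coord_dist (x y : EuclideanSpace ℝ (Fin 2)) (i : Fin 2) : dist (x i) (y i) ≤ dist x y := by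
  rw [EuclideanSpace.dist_eq]
  have : dist (x i) (y i) = Real.sqrt (dist (x i) (y i) ^ 2) := by
    rw [Real.sqrt_sq dist_nonneg]
  rw [this]
  apply Real.sqrt_le_sqrt
  exact Finset.single_le_sum (f := fun j => dist (x j) (y j) ^ 2) (fun j _ => sq_nonneg _)
    (Finset.mem_univ i)

lemma coord_edist (x y : EuclideanSpace ℝ (Fin 2)) (i : Fin 2) :
    ENNReal.ofReal (dist (x i) (y i)) ≤ edist x y := by
  rw [edist_dist]
  exact ENNReal.ofReal_le_ofReal (coord_dist x y i)

/-- Any curve in `slitSquare` crossing the slit line `x = 1/2^(k+1)` must climb above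
height `1/2`, so its length is at least `(1/2 - p 1) + (1/2 - q 1)`. -/
lemma key_lower (k : ℕ) (p q : EuclideanSpace ℝ (Fin 2))
    (hpc : 1 / 2 ^ (k + 1) < p 0) (hqc : q 0 < 1 / 2 ^ (k + 1))
    (hp1 : p 1 ≤ 1/2) (hq1 : q 1 ≤ 1/2) :
    ENNReal.ofReal ((1/2 - p 1) + (1/2 - q 1)) ≤ innerEDistSlit p q := by
  refine le_iInf fun γ => le_iInf fun a => le_iInf fun b => le_iInf fun h => ?_
  obtain ⟨hab, hcont, hγa, hγb, hmaps⟩ := h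
  -- the first coordinate is continuous along γ
  have hc1 : ContinuousOn (fun t => γ t 0) (Icc a b) :=
    (PiLp.continuous_apply 2 (fun _ : Fin 2 => ℝ) 0).comp_continuousOn hcont
  -- IVT : some point crosses the slit line
  have hmem : (1 / 2 ^ (k + 1) : ℝ) ∈ Icc (γ b 0) (γ a 0) := by
    rw [hγa, hγb]; exact ⟨le_of_lt hqc, le_of_lt hpc⟩
  obtain ⟨t₀, ht₀, ht₀c⟩ := intermediate_value_Icc' hab hc1 hmem
  -- at t₀ the curve must be above the slit
  have hγt₀ : γ t₀ ∈ slitSquare := hmaps ht₀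
  have hhigh : 1/2 < γ t₀ 1 := by
    rcases hγt₀ with ⟨⟨-, h01⟩, hnot⟩
    by_contra hle
    push_neg at hle
    exact hnot (mem_iUnion.2 ⟨k, ht₀c, le_of_lt h01.1, hle⟩)
  -- variation splits at t₀
  have hsplit : eVariationOn γ (Icc a t₀) + eVariationOn γ (Icc t₀ b)
      = eVariationOn γ (Icc a b) := by
    have := eVariationOn.Icc_add_Icc γ (s := Icc a b) ht₀.1 ht₀.2 ht₀
    simpa [Set.Icc_inter_Icc, max_self, min_self,
      min_eq_right ht₀.2, max_eq_right ht₀.1, Set.inter_self] using this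
  rw [← hsplit]
  have h1 : ENNReal.ofReal (1/2 - p 1) ≤ eVariationOn γ (Icc a t₀) := by
    refine le_trans ?_ (eVariationOn.edist_le γ (left_mem_Icc.2 ht₀.1) (right_mem_Icc.2 ht₀.1))
    refine le_trans ?_ (coord_edist _ _ 1)
    apply ENNReal.ofReal_le_ofReal
    rw [hγa, Real.dist_eq, abs_sub_comm]
    calc (1:ℝ)/2 - p 1 ≤ γ t₀ 1 - p 1 := by linarith
    _ ≤ |γ t₀ 1 - p 1| := le_abs_self _
  have h2 : ENNReal.ofReal (1/2 - q 1) ≤ eVariationOn γ (Icc t₀ b) := by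
    refine le_trans ?_ (eVariationOn.edist_le γ (left_mem_Icc.2 ht₀.2) (right_mem_Icc.2 ht₀.2))
    refine le_trans ?_ (coord_edist _ _ 1)
    apply ENNReal.ofReal_le_ofReal
    rw [hγb, Real.dist_eq]
    calc (1:ℝ)/2 - q 1 ≤ γ t₀ 1 - q 1 := by linarith
    _ ≤ |γ t₀ 1 - q 1| := le_abs_self _
  calc ENNReal.ofReal ((1/2 - p 1) + (1/2 - q 1))
      ≤ ENNReal.ofReal (1/2 - p 1) + ENNReal.ofReal (1/2 - q 1) := ENNReal.ofReal_add_le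
    _ ≤ _ := add_le_add h1 h2

lemma slitMidpoint_zero (j : ℕ) : slitMidpoint j 0 = 3 / 2 ^ (j + 2) := rfl
lemma slitMidpoint_one (j : ℕ) : slitMidpoint j 1 = 0 := rfl

/-- Main separation estimate: for `i < j`, any approximating sequences of `x_i` and `x_j`
inside `slitSquare` have inner distances with liminf at least `1`. -/
lemma main_sep (i j : ℕ) (hij : i < j)
    (u v : ℕ → EuclideanSpace ℝ (Fin 2))
    (hu : ∀ n, u n ∈ slitSquare) (hv : ∀ n, v n ∈ slitSquare)
    (hlu : Tendsto u atTop (nhds (slitMidpoint i)))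
    (hlv : Tendsto v atTop (nhds (slitMidpoint j))) :
    (1 : ℝ≥0∞) ≤ Filter.liminf (fun n => innerEDistSlit (u n) (v n)) Filter.atTop := by
  have hcont0 : Continuous fun x : EuclideanSpace ℝ (Fin 2) => x 0 :=
    PiLp.continuous_apply 2 (fun _ : Fin 2 => ℝ) 0
  have hcont1 : Continuous fun x : EuclideanSpace ℝ (Fin 2) => x 1 :=
    PiLp.continuous_apply 2 (fun _ : Fin 2 => ℝ) 1
  have hu0 : Tendsto (fun n => u n 0) atTop (nhds (3 / 2 ^ (i + 2))) := by
    simpa [slitMidpoint_zero, Function.comp_def] using (hcont0.tendsto _).comp hlu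
  have hv0 : Tendsto (fun n => v n 0) atTop (nhds (3 / 2 ^ (j + 2))) := by
    simpa [slitMidpoint_zero, Function.comp_def] using (hcont0.tendsto _).comp hlv
  have hu1 : Tendsto (fun n => u n 1) atTop (nhds 0) := by
    simpa [slitMidpoint_one, Function.comp_def] using (hcont1.tendsto _).comp hlu
  have hv1 : Tendsto (fun n => v n 1) atTop (nhds 0) := by
    simpa [slitMidpoint_one, Function.comp_def] using (hcont1.tendsto _).comp hlv
  -- the slit at 1/2^(i+1) separates the two limit points
  have hci : (1 / 2 ^ (i + 1) : ℝ) < 3 / 2 ^ (i + 2) := by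
    rw [div_lt_div_iff₀ (by positivity) (by positivity)]
    ring_nf
    nlinarith [pow_pos (by norm_num : (0:ℝ) < 2) i]
  have hcj : (3 / 2 ^ (j + 2) : ℝ) < 1 / 2 ^ (i + 1) := by
    rw [div_lt_div_iff₀ (by positivity) (by positivity)]
    have : (2:ℝ) ^ (j + 2) = 2 ^ (i + 1) * 2 ^ (j + 1 - i) := by
      rw [← pow_add]; congr 1; omega
    rw [this]
    have h4 : (4:ℝ) ≤ 2 ^ (j + 1 - i) := by
      calc (4:ℝ) = 2 ^ 2 := by norm_num
      _ ≤ 2 ^ (j + 1 - i) := pow_le_pow_right₀ (by norm_num) (by omega)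
    nlinarith [pow_pos (by norm_num : (0:ℝ) < 2) (i+1)]
  have heu0 : ∀ᶠ n in atTop, 1 / 2 ^ (i + 1) < u n 0 := hu0.eventually (eventually_gt_nhds hci)
  have hev0 : ∀ᶠ n in atTop, v n 0 < 1 / 2 ^ (i + 1) := hv0.eventually (eventually_lt_nhds hcj)
  have heu1 : ∀ᶠ n in atTop, u n 1 ≤ 1/2 := hu1.eventually (eventually_le_nhds (by norm_num))
  have hev1 : ∀ᶠ n in atTop, v n 1 ≤ 1/2 := hv1.eventually (eventually_le_nhds (by norm_num))
  set g : ℕ → ℝ≥0∞ := fun n => ENNReal.ofReal ((1/2 - u n 1) + (1/2 - v n 1)) with hg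
  have hgf : ∀ᶠ n in atTop, g n ≤ innerEDistSlit (u n) (v n) := by
    filter_upwards [heu0, hev0, heu1, hev1] with n h1 h2 h3 h4
    exact key_lower i (u n) (v n) h1 h2 h3 h4
  have hgt : Tendsto g atTop (nhds 1) := by
    have : Tendsto (fun n => (1/2 - u n 1) + (1/2 - v n 1)) atTop (nhds 1) := by
      have := ((tendsto_const_nhds (x := (1/2 : ℝ))).sub hu1).add
        ((tendsto_const_nhds (x := (1/2 : ℝ))).sub hv1)
      norm_num at this ⊢; exact this
    have h2 := (ENNReal.continuous_ofReal.tendsto _).comp this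
    simpa [hg, Function.comp_def] using h2
  calc (1 : ℝ≥0∞) = Filter.liminf g atTop := (hgt.liminf_eq).symm
    _ ≤ _ := liminf_le_liminf hgf

/-- **Example (non-compact inner boundary).**  For the slit square `Ω`, the boundary points
`x_j = (3/2^{j+2},0)` of the inner metric satisfy `λ_Ω(x_j, x_{j+1}) ≥ 1`; indeed any two
distinct such boundary points are at inner distance at least `1`, expressed here via
approximating sequences in `Ω`.  Consequently `(x_j)` has no convergent subsequence in the
metric boundary of `(Ω, λ_Ω)`, which is therefore closed and bounded but not compact. -/
theorem slitSquare_inner_boundary_separated :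
    (∀ j : ℕ, 1 ≤ j →
      ∀ u v : ℕ → EuclideanSpace ℝ (Fin 2),
        (∀ n, u n ∈ slitSquare) → (∀ n, v n ∈ slitSquare) →
        Tendsto u atTop (nhds (slitMidpoint j)) →
        Tendsto v atTop (nhds (slitMidpoint (j + 1))) →
        (1 : ℝ≥0∞) ≤ Filter.liminf (fun n => innerEDistSlit (u n) (v n)) Filter.atTop)
    ∧
    (∀ i j : ℕ, 1 ≤ i → i < j →
      ∀ u v : ℕ → EuclideanSpace ℝ (Fin 2),
        (∀ n, u n ∈ slitSquare) → (∀ n, v n ∈ slitSquare) →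
        Tendsto u atTop (nhds (slitMidpoint i)) →
        Tendsto v atTop (nhds (slitMidpoint j)) →
        (1 : ℝ≥0∞) ≤ Filter.liminf (fun n => innerEDistSlit (u n) (v n)) Filter.atTop) := by
  constructor
  · exact fun j _ u v hu hv hlu hlv => main_sep j (j + 1) (by omega) u v hu hv hlu hlv
  · exact fun i j _ hij u v hu hv hlu hlv => main_sep i j hij u v hu hv hlu hlv
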